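/- Let g = [[a e^{L/2}, b e^{L/2}], [c e^{-L/2}, d e^{-L/2}]] be an element of PSL(2,R) with a > 0, ad - bc = 1, and a, b, c, d bounded. Then the displacement μ(g), defined by cosh(μ(g)/2) = trace(g)/2 with μ(g) ≥ 0, satisfies μ(g) = L + 2·ln(a) + O(e^{-L}) as L → ∞. -/

import Mathlib

lemma cosh_gap (m x y : ℝ) (hm : 0 ≤ m) (hmx : m ≤ x) (hxy : x ≤ y) :
    Real.sinh m * (y - x) ≤ Real.cosh y - Real.cosh x := by
  have hy : Real.cosh y = Real.cosh x * Real.cosh (y - x) + Real.sinh x * Real.sinh (y - x) := by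
    rw [show y = x + (y - x) by ring, Real.cosh_add]; ring_nf
  have h1 : 1 ≤ Real.cosh (y - x) := Real.one_le_cosh _
  have h2 : y - x ≤ Real.sinh (y - x) := Real.self_le_sinh_iff.mpr (by linarith)
  have h3 : Real.sinh m ≤ Real.sinh x := Real.sinh_le_sinh.mpr hmx
  have h4 : 0 ≤ Real.sinh m := Real.sinh_nonneg_iff.mpr hm
  have h5 : 0 < Real.cosh x := Real.cosh_pos x
  nlinarith [sub_nonneg.mpr hxy]

/-- For `g = G_L · [[a,b],[c,d]] ∈ PSL(2,ℝ)` with `a > 0`, `ad − bc = 1`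
and `a, b, c, d` bounded (by `B`), the displacement `μ(g)`, defined by
`cosh(μ(g)/2) = trace(g)/2 = (a e^{L/2} + d e^{−L/2})/2` with `μ(g) ≥ 0`, satisfies
`μ(g) = L + 2 ln a + O(e^{−L})` as `L → ∞`. -/
theorem displacement_asymptotic (B : ℝ) (hB : 0 < B) :
    ∃ C L₀ : ℝ, 0 < C ∧ ∀ a b c d : ℝ, 0 < a → a * d - b * c = 1 →
      |a| ≤ B → |b| ≤ B → |c| ≤ B → |d| ≤ B → B⁻¹ ≤ a →
      ∀ L : ℝ, L₀ ≤ L → ∀ μ : ℝ, 0 ≤ μ →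
        Real.cosh (μ / 2) = (a * Real.exp (L / 2) + d * Real.exp (-(L / 2))) / 2 →
        |μ - (L + 2 * Real.log a)| ≤ C * Real.exp (-L) := by
  refine ⟨32 * B ^ 2, 8 + 2 * Real.log B, by positivity, ?_⟩
  intro a b c d ha hdet hab hbb hcb hdb hBa L hL μ hμ hcosh
  have haB : a ≤ B := le_trans (le_abs_self a) hab
  have hBinv : 0 < B⁻¹ := inv_pos.mpr hB
  have hBB : B⁻¹ * B = 1 := inv_mul_cancel₀ hB.ne'
  have hB1 : 1 ≤ B := by nlinarith [le_trans hBa haB]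
  have hlogB : 0 ≤ Real.log B := Real.log_nonneg hB1
  have hainv : a⁻¹ ≤ B := by
    rw [inv_le_comm₀ ha hB]; exact hBa
  have hainv0 : 0 < a⁻¹ := inv_pos.mpr ha
  set u := μ / 2 with hu
  set v := L / 2 + Real.log a with hv
  set E := Real.exp (L / 2) with hE
  set N := Real.exp (-(L / 2)) with hN
  have hEpos : 0 < E := Real.exp_pos _
  have hNpos : 0 < N := Real.exp_pos _
  have hNE : N * E = 1 := by rw [hN, hE, ← Real.exp_add]; simp
  have hEE : Real.exp L = E * E := by rw [hE, ← Real.exp_add]; ring_nf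
  have hNN : Real.exp (-L) = N * N := by rw [hN, ← Real.exp_add]; ring_nf
  have hevv : Real.exp v = E * a := by rw [hv, Real.exp_add, Real.exp_log ha, hE]
  have henv : Real.exp (-v) = N * a⁻¹ := by
    rw [show -v = -(L/2) + Real.log a⁻¹ by
      rw [Real.log_inv, hv]; ring, Real.exp_add, Real.exp_log hainv0, hN]
  have hcoshv : Real.cosh v = (a * E + a⁻¹ * N) / 2 := by
    rw [Real.cosh_eq, hevv, henv]; ring
  have hΔ : Real.cosh u - Real.cosh v = (d - a⁻¹) * N / 2 := by
    rw [hcosh, hcoshv]; ring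
  set m := L / 2 - Real.log B - Real.log 4 with hm
  have hlog4 : Real.log 4 ≤ 3 := by
    have := Real.log_le_sub_one_of_pos (by norm_num : (0:ℝ) < 4); linarith
  have hlog4' : (0:ℝ) ≤ Real.log 4 := Real.log_nonneg (by norm_num)
  have hm1 : 1 ≤ m := by rw [hm]; linarith
  have hmv : m ≤ v := by
    have : -Real.log B ≤ Real.log a := by
      rw [← Real.log_inv]; exact Real.log_le_log (inv_pos.mpr hB) hBa
    rw [hm, hv]; linarith
  have hexpm : Real.exp m = B⁻¹ * E / 4 := by
    rw [hm, Real.exp_sub, Real.exp_sub, Real.exp_log hB,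
      Real.exp_log (by norm_num : (0:ℝ) < 4), ← hE]
    field_simp
  have heL : 2 * B ^ 2 ≤ Real.exp L := by
    have h8 : Real.exp (8 + 2 * Real.log B) ≤ Real.exp L := Real.exp_le_exp.mpr hL
    have heq : Real.exp (8 + 2 * Real.log B) = Real.exp 8 * (B * B) := by
      rw [show (8:ℝ) + 2 * Real.log B = 8 + Real.log B + Real.log B by ring,
        Real.exp_add, Real.exp_add, Real.exp_log hB]; ring
    have he8 : (2:ℝ) ≤ Real.exp 8 := by linarith [Real.add_one_le_exp (8:ℝ)]
    have h2 : 2 * (B * B) ≤ Real.exp 8 * (B * B) :=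
      mul_le_mul_of_nonneg_right he8 (by positivity)
    have hBsq : B ^ 2 = B * B := sq B
    linarith
  have hkey : B * N ≤ B⁻¹ * E / 2 := by
    have heL' : 2 * B ^ 2 ≤ E * E := hEE ▸ heL
    have expand : N * B⁻¹ / 2 * (E * E - 2 * B ^ 2)
        = (N * E) * (B⁻¹ * E) / 2 - (B⁻¹ * B) * (N * B) := by ring
    rw [hNE, hBB] at expand
    have hpos : 0 ≤ N * B⁻¹ / 2 * (E * E - 2 * B ^ 2) :=
      mul_nonneg (by positivity) (by linarith)
    rw [expand] at hpos
    linarith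
  -- exp m ≤ cosh u, hence m ≤ u
  have hcoshu_lb : Real.exp m ≤ Real.cosh u := by
    rw [hexpm, hcosh]
    have h1 : B⁻¹ * E ≤ a * E := mul_le_mul_of_nonneg_right hBa hEpos.le
    have h2 : -(B * N) ≤ d * N := by
      have hd := (abs_le.mp hdb).1
      have := mul_le_mul_of_nonneg_right hd hNpos.le
      linarith [neg_mul B N]
    linarith
  have hmu : m ≤ u := by
    have hun : 0 ≤ u := by rw [hu]; linarith
    have hcu : Real.cosh u ≤ Real.exp u := by
      rw [Real.cosh_eq]
      have : Real.exp (-u) ≤ Real.exp u := Real.exp_le_exp.mpr (by linarith)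
      linarith
    exact Real.exp_le_exp.mp (le_trans hcoshu_lb hcu)
  -- sinh m lower bound
  have hsinhm : B⁻¹ * E / 16 ≤ Real.sinh m := by
    rw [Real.sinh_eq]
    have h1 : Real.exp (-m) ≤ 1 := Real.exp_le_one_iff.mpr (by linarith)
    have h2 : (2:ℝ) ≤ Real.exp m := by linarith [Real.add_one_le_exp m]
    rw [hexpm] at h2 ⊢
    linarith
  -- gap bound
  have hΔbound : |Real.cosh u - Real.cosh v| ≤ B * N := by
    rw [hΔ]
    have hd := abs_le.mp hdb
    rw [abs_div, abs_mul, abs_of_pos hNpos, show |(2:ℝ)| = 2 by norm_num]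
    have hda : |d - a⁻¹| ≤ 2 * B := abs_le.mpr ⟨by linarith, by linarith⟩
    have h3 : |d - a⁻¹| * N ≤ 2 * B * N := mul_le_mul_of_nonneg_right hda hNpos.le
    linarith
  -- conclude
  have key : ∀ x y : ℝ, m ≤ x → m ≤ y → x ≤ y →
      Real.cosh y - Real.cosh x ≤ B * N → y - x ≤ 16 * B ^ 2 * (N * N) := by
    intro x y hx hy hxy hc
    have hg := cosh_gap m x y (by linarith) hx hxy
    have h1 : B⁻¹ * E / 16 * (y - x) ≤ B * N := by
      have := mul_le_mul_of_nonneg_right hsinhm (sub_nonneg.mpr hxy)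
      linarith
    have heqq : B⁻¹ * E / 16 * (16 * B ^ 2 * (N * N)) = B * N := by
      have : B⁻¹ * E / 16 * (16 * B ^ 2 * (N * N)) = (B⁻¹ * B) * (N * E) * (B * N) := by ring
      rw [this, hBB, hNE]; ring
    have h16 : (0:ℝ) < B⁻¹ * E / 16 := by positivity
    exact (mul_le_mul_iff_right₀ h16).mp (by rw [heqq]; exact h1)
  have habs : |u - v| ≤ 16 * B ^ 2 * (N * N) := by
    rcases le_total u v with h | h
    · rw [abs_sub_comm, abs_of_nonneg (sub_nonneg.mpr h)]
      refine key u v hmu hmv h ?_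
      calc Real.cosh v - Real.cosh u ≤ |Real.cosh u - Real.cosh v| := by
            rw [abs_sub_comm]; exact le_abs_self _
        _ ≤ B * N := hΔbound
    · rw [abs_of_nonneg (sub_nonneg.mpr h)]
      exact key v u hmv hmu h (le_trans (le_abs_self _) hΔbound)
  have hμeq : μ - (L + 2 * Real.log a) = 2 * (u - v) := by rw [hu, hv]; ring
  rw [hμeq, hNN, abs_mul, abs_of_pos (by norm_num : (0:ℝ) < 2)]
  linarith
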